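/- arXiv:2601.14195 — 2 statements merged into one kernel-verified Lean document; each statement's English description precedes it below -/
import Mathlib

section
/- For SMI instances, the optimal value OPT of the problem of minimizing, over maximum-cardinality matchings, the maximum number of blocking pairs any agent is contained in, satisfies OPT ≤ n − 1 where n is the number of agents, and there is an infinite family of instances with n = 2(OPT + 1); hence OPT = Θ(n) in the worst case. -/
/-- A Stable Roommates (SRI) instance: a set of agents, symmetric irreflexive
acceptability, and for each agent a strict (transitive, total, irreflexive)
preference order over its acceptable partners. -/
structure SRI (A : Type) where
  acc : A → A → Prop
  acc_symm : ∀ a b, acc a b → acc b a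
  acc_irrefl : ∀ a, ¬ acc a a
  /-- `pref a b c` : agent `a` strictly prefers `b` to `c`. -/
  pref : A → A → A → Prop
  pref_acc : ∀ a b c, pref a b c → acc a b ∧ acc a c
  pref_trans : ∀ a b c d, pref a b c → pref a c d → pref a b d
  pref_irrefl : ∀ a b, ¬ pref a b b
  pref_total : ∀ a b c, acc a b → acc a c → b ≠ c → pref a b c ∨ pref a c b

/-- A matching, encoded as an involution: `m a = a` means `a` is unmatched. -/
structure Matching {A : Type} (I : SRI A) where
  m : A → A
  invol : ∀ a, m (m a) = a
  acc_matched : ∀ a, m a ≠ a → I.acc a (m a)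

/-- `{a, b}` is a blocking pair: mutually acceptable, and each is unmatched or
prefers the other to its current partner. -/
def blocks {A : Type} (I : SRI A) (M : Matching I) (a b : A) : Prop :=
  I.acc a b ∧ (M.m a = a ∨ I.pref a b (M.m a)) ∧ (M.m b = b ∨ I.pref b a (M.m b))

/-- Number of blocking pairs containing agent `a`. -/
noncomputable def bpa {A : Type} (I : SRI A) (M : Matching I) (a : A) : ℕ :=
  {b | blocks I M a b}.ncard

/-- Maximum over agents of the number of blocking pairs containing that agent. -/
noncomputable def maxBP {A : Type} (I : SRI A) (M : Matching I) : ℕ :=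
  sSup (Set.range fun a => bpa I M a)

/-- Total number of (unordered) blocking pairs. -/
noncomputable def totalBP {A : Type} (I : SRI A) (M : Matching I) : ℕ :=
  {p : Sym2 A | ∃ a b, p = s(a, b) ∧ blocks I M a b}.ncard

/-- Number of agents contained in at least one blocking pair. -/
noncomputable def blockAgents {A : Type} (I : SRI A) (M : Matching I) : ℕ :=
  {a | ∃ b, blocks I M a b}.ncard

/-- Number of matched agents (twice the number of pairs). -/
noncomputable def msize {A : Type} (I : SRI A) (M : Matching I) : ℕ :=
  {a | M.m a ≠ a}.ncard

/-- `M` is a maximum-cardinality matching. -/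
def MaxCard {A : Type} (I : SRI A) (M : Matching I) : Prop :=
  ∀ M' : Matching I, msize I M' ≤ msize I M

/-- The instance is bipartite with respect to the two sides given by `side`. -/
def Bip {A : Type} (I : SRI A) (side : A → Bool) : Prop :=
  ∀ a b, I.acc a b → side a ≠ side b

/-- `M` is stable: no blocking pair. -/
def Stable {A : Type} (I : SRI A) (M : Matching I) : Prop :=
  ∀ a b, ¬ blocks I M a b



section Part1
variable {A : Type} [Fintype A] (I : SRI A)

lemma msize_le_card (M : Matching I) : msize I M ≤ Fintype.card A := by
  have h := Set.ncard_le_ncard (Set.subset_univ {a | M.m a ≠ a}) Set.finite_univ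
  simpa [msize, Set.ncard_univ, Nat.card_eq_fintype_card] using h

lemma exists_maxcard : ∃ M : Matching I, MaxCard I M := by
  set S := Set.range (fun M : Matching I => msize I M) with hS
  have hne : S.Nonempty := ⟨_, ⟨⟨id, fun _ => rfl, fun a h => absurd rfl h⟩, rfl⟩⟩
  have hbdd : BddAbove S := ⟨Fintype.card A, by rintro _ ⟨M, rfl⟩; exact msize_le_card I M⟩
  obtain ⟨M, hM⟩ := Nat.sSup_mem hne hbdd
  refine ⟨M, fun M' => ?_⟩
  have h := le_csSup hbdd (⟨M', rfl⟩ : msize I M' ∈ S)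
  rw [← hM] at h
  exact h

lemma bpa_le (M : Matching I) (a : A) : bpa I M a ≤ Fintype.card A - 1 := by
  have hsub : {b | blocks I M a b} ⊆ {a}ᶜ := by
    intro b hb
    simp only [Set.mem_compl_iff, Set.mem_singleton_iff]
    rintro rfl
    exact I.acc_irrefl _ hb.1
  have h1 : ({a}ᶜ : Set A).ncard = Fintype.card A - 1 := by
    have := Set.ncard_add_ncard_compl ({a} : Set A)
    simp only [Set.ncard_singleton, Nat.card_eq_fintype_card] at this
    omega
  calc bpa I M a ≤ ({a}ᶜ : Set A).ncard :=
        Set.ncard_le_ncard hsub (Set.toFinite _)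
    _ = _ := h1

lemma maxBP_le (M : Matching I) : maxBP I M ≤ Fintype.card A - 1 := by
  apply csSup_le'
  rintro _ ⟨a, rfl⟩
  exact bpa_le I M a

end Part1

section Part2
variable (k : ℕ)

def Acc2 (a b : Fin (2 * (k + 1))) : Prop :=
  (a.val < k + 1 ∧ (b.val = (k + 1) + a.val ∨ b.val = k + 1)) ∨
  (b.val < k + 1 ∧ (a.val = (k + 1) + b.val ∨ a.val = k + 1))

def rk (a b : Fin (2 * (k + 1))) : ℕ :=
  if a.val = k + 1 then (if b.val = 0 then k + 1 else b.val) else b.val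

def Pref2 (a b c : Fin (2 * (k + 1))) : Prop :=
  Acc2 k a b ∧ Acc2 k a c ∧ rk k a b < rk k a c

def Inst : SRI (Fin (2 * (k + 1))) where
  acc := Acc2 k
  acc_symm := by intro a b h; unfold Acc2 at *; tauto
  acc_irrefl := by intro a h; unfold Acc2 at h; omega
  pref := Pref2 k
  pref_acc := fun _ _ _ h => ⟨h.1, h.2.1⟩
  pref_trans := fun _ _ _ _ h1 h2 => ⟨h1.1, h2.2.1, lt_trans h1.2.2 h2.2.2⟩
  pref_irrefl := fun _ _ h => lt_irrefl _ h.2.2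
  pref_total := by
    intro a b c hab hac hbc
    have hbc' : b.val ≠ c.val := fun h => hbc (Fin.ext h)
    have hne : rk k a b ≠ rk k a c := by
      unfold Acc2 at hab hac
      unfold rk
      split_ifs <;> omega
    rcases lt_or_gt_of_ne hne with h | h
    · exact Or.inl ⟨hab, hac, h⟩
    · exact Or.inr ⟨hac, hab, h⟩

def m0 (a : Fin (2 * (k + 1))) : Fin (2 * (k + 1)) :=
  if h : a.val < k + 1 then ⟨a.val + (k + 1), by omega⟩
  else ⟨a.val - (k + 1), by have := a.isLt; omega⟩

lemma m0_val (a : Fin (2 * (k + 1))) :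
    (m0 k a).val = if a.val < k + 1 then a.val + (k + 1) else a.val - (k + 1) := by
  unfold m0; split <;> rfl

def M0 : Matching (Inst k) where
  m := m0 k
  invol := by
    intro a
    have := a.isLt
    apply Fin.ext
    rw [m0_val, m0_val]
    split_ifs <;> omega
  acc_matched := by
    intro a _
    have := a.isLt
    show Acc2 k a (m0 k a)
    unfold Acc2
    rw [m0_val]
    split_ifs <;> omega

lemma m0_ne (a : Fin (2 * (k + 1))) : m0 k a ≠ a := by
  have := a.isLt
  intro h
  have h2 := congrArg Fin.val h
  rw [m0_val] at h2
  split_ifs at h2 <;> omega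

lemma msize_M0 : msize (Inst k) (M0 k) = 2 * (k + 1) := by
  have : {a | (M0 k).m a ≠ a} = Set.univ := by
    ext a; exact ⟨fun _ => trivial, fun _ => m0_ne k a⟩
  rw [msize, this, Set.ncard_univ]
  simp

lemma maxcard_M0 : MaxCard (Inst k) (M0 k) := by
  intro M'
  rw [msize_M0]
  have := msize_le_card (Inst k) M'
  simpa using this

lemma blocks_iff (M : Matching (Inst k)) (hm : ∀ a, M.m a = m0 k a)
    (a b : Fin (2 * (k + 1))) :
    blocks (Inst k) M a b ↔
      (1 ≤ a.val ∧ a.val < k + 1 ∧ b.val = k + 1) ∨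
      (1 ≤ b.val ∧ b.val < k + 1 ∧ a.val = k + 1) := by
  have ha := a.isLt
  have hb := b.isLt
  have e : blocks (Inst k) M a b =
      (Acc2 k a b ∧ (M.m a = a ∨ Pref2 k a b (M.m a)) ∧
        (M.m b = b ∨ Pref2 k b a (M.m b))) := rfl
  rw [e, hm a, hm b]
  simp only [Pref2, Acc2, rk, Fin.ext_iff, m0_val]
  split_ifs <;> omega

lemma bpa_w0 (M : Matching (Inst k)) (hm : ∀ a, M.m a = m0 k a) :
    bpa (Inst k) M ⟨k + 1, by omega⟩ = k := by
  have hbound : ∀ m ∈ Finset.Ico 1 (k + 1), m < 2 * (k + 1) := by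
    intro m hm; simp only [Finset.mem_Ico] at hm; omega
  have hset : {b | blocks (Inst k) M ⟨k + 1, by omega⟩ b} =
      ↑((Finset.Ico 1 (k + 1)).attachFin hbound) := by
    ext b
    rw [Set.mem_setOf_eq, blocks_iff k M hm]
    simp only [Finset.mem_coe, Finset.mem_attachFin, Finset.mem_Ico, Fin.val_mk, and_true]
    omega
  rw [bpa, hset, Set.ncard_coe_finset, Finset.card_attachFin]
  simp

lemma bpa_le_k (M : Matching (Inst k)) (hm : ∀ a, M.m a = m0 k a)
    (a : Fin (2 * (k + 1))) : bpa (Inst k) M a ≤ k := by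
  by_cases ha : a.val = k + 1
  · have : a = ⟨k + 1, by omega⟩ := Fin.ext ha
    rw [this, bpa_w0 k M hm]
  · rcases Set.eq_empty_or_nonempty {b | blocks (Inst k) M a b} with h | ⟨b, hb⟩
    · rw [bpa, h]; simp
    · have hb' := (blocks_iff k M hm a b).mp hb
      have hk : 1 ≤ k := by omega
      have hsub : {b | blocks (Inst k) M a b} ⊆ {(⟨k + 1, by omega⟩ : Fin (2 * (k + 1)))} := by
        intro c hc
        have := (blocks_iff k M hm a c).mp hc
        simp only [Set.mem_singleton_iff, Fin.ext_iff]
        omega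
      calc bpa (Inst k) M a ≤ _ := Set.ncard_le_ncard hsub (Set.toFinite _)
        _ = 1 := Set.ncard_singleton _
        _ ≤ k := hk

lemma maxBP_eq_k (M : Matching (Inst k)) (hm : ∀ a, M.m a = m0 k a) :
    maxBP (Inst k) M = k := by
  apply le_antisymm
  · apply csSup_le'
    rintro _ ⟨a, rfl⟩
    exact bpa_le_k k M hm a
  · exact le_csSup ⟨k, by rintro _ ⟨a, rfl⟩; exact bpa_le_k k M hm a⟩
      ⟨⟨k + 1, by omega⟩, bpa_w0 k M hm⟩

lemma eq_m0 (M : Matching (Inst k)) (hM : MaxCard (Inst k) M) :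
    ∀ a, M.m a = m0 k a := by
  -- every agent is matched
  have hmatched : ∀ a, M.m a ≠ a := by
    intro a ha
    have h1 : msize (Inst k) M = 2 * (k + 1) :=
      le_antisymm (by simpa using msize_le_card (Inst k) M)
        (by have h := hM (M0 k); rwa [msize_M0] at h)
    have hsub : {x | M.m x ≠ x} ⊆ {a}ᶜ := by
      intro x hx
      simp only [Set.mem_compl_iff, Set.mem_singleton_iff]
      rintro rfl
      exact hx ha
    have h2 : ({a}ᶜ : Set (Fin (2 * (k + 1)))).ncard = 2 * (k + 1) - 1 := by
      have := Set.ncard_add_ncard_compl ({a} : Set (Fin (2 * (k + 1))))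
      simp only [Set.ncard_singleton, Nat.card_eq_fintype_card, Fintype.card_fin] at this
      omega
    have := Set.ncard_le_ncard hsub (Set.toFinite _)
    rw [← msize, h1, h2] at this
    omega
  -- matched partners forced by acceptability, for extreme agents
  have key : ∀ a : Fin (2 * (k + 1)), a.val = 0 ∨ k + 1 < a.val → M.m a = m0 k a := by
    intro a ha
    have hacc : Acc2 k a (M.m a) := M.acc_matched a (hmatched a)
    have hlt := a.isLt
    have hlt2 := (M.m a).isLt
    apply Fin.ext
    rw [m0_val]
    unfold Acc2 at hacc
    split_ifs <;> omega
  intro a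
  by_cases ha : a.val = 0 ∨ k + 1 < a.val
  · exact key a ha
  · -- a is man i (1 ≤ i ≤ k) or woman 0; its m0-partner b is extreme
    set b := m0 k a with hbdef
    have hlt := a.isLt
    have hb : b.val = 0 ∨ k + 1 < b.val := by
      rw [hbdef, m0_val]
      split_ifs <;> omega
    have h1 : M.m b = m0 k b := key b hb
    have h2 : m0 k b = a := by
      have := (M0 k).invol a
      exact this
    rw [h2] at h1
    calc M.m a = M.m (M.m b) := by rw [h1]
      _ = b := M.invol b
      _ = m0 k a := rfl

/-- For SMI instances, the optimum of minimizing over maximum-cardinality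
matchings the maximum number of blocking pairs per agent is at most n - 1, and
there is an infinite family of instances attaining n = 2(OPT + 1); hence
OPT = Θ(n) in the worst case. -/
theorem stmt7 :
    (∀ (A : Type) [Fintype A] (I : SRI A) (side : A → Bool), Bip I side →
      ∃ M : Matching I, MaxCard I M ∧ maxBP I M ≤ Fintype.card A - 1) ∧
    (∀ k : ℕ, ∃ (I : SRI (Fin (2 * (k + 1)))) (side : Fin (2 * (k + 1)) → Bool),
      Bip I side ∧
      (∀ M : Matching I, MaxCard I M → k ≤ maxBP I M) ∧
      (∃ M : Matching I, MaxCard I M ∧ maxBP I M = k)) := by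
  constructor
  · intro A _ I side _
    obtain ⟨M, hM⟩ := exists_maxcard I
    exact ⟨M, hM, maxBP_le I M⟩
  · intro k
    refine ⟨Inst k, fun a => decide (a.val < k + 1), ?_, ?_, ?_⟩
    · intro a b hab
      have : Acc2 k a b := hab
      unfold Acc2 at this
      simp only [ne_eq, decide_eq_decide]
      omega
    · intro M hM
      rw [maxBP_eq_k k M (eq_m0 k M hM)]
    · exact ⟨M0 k, maxcard_M0 k, maxBP_eq_k k (M0 k) (fun _ => rfl)⟩

end Part2
end

section
/- Let I be an SMI (bipartite) instance in which all preference lists have length at most 2. Then there exists a maximum-cardinality matching M of I such that no agent is contained in more than one blocking pair. -/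
open scoped Classical

section Aux

variable {A : Type} [Fintype A] {I : SRI A}

lemma blocks_symm {M : Matching I} {a b : A} (h : blocks I M a b) : blocks I M b a :=
  ⟨I.acc_symm _ _ h.1, h.2.2, h.2.1⟩

lemma third (hdeg : ∀ a, {b | I.acc a b}.ncard ≤ 2) {a b c d : A}
    (hb : I.acc a b) (hc : I.acc a c) (hd : I.acc a d)
    (hbc : b ≠ c) (hdb : d ≠ b) (hdc : d ≠ c) : False := by
  have hsub : ({b, c, d} : Set A) ⊆ {x | I.acc a x} := by
    intro x hx
    rcases hx with rfl | rfl | rfl <;> assumption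
  have h3 : ({b, c, d} : Set A).ncard = 3 := by
    rw [Set.ncard_insert_of_notMem (by simp [hbc, hdb.symm]) (Set.toFinite _),
        Set.ncard_pair hdc.symm]
  have := Set.ncard_le_ncard hsub (Set.toFinite _)
  have := hdeg a
  omega

/-- Matching up two unmatched agents. -/
noncomputable def match1 (M : Matching I) (a b : A) (ha : M.m a = a) (hb : M.m b = b)
    (hacc : I.acc a b) : Matching I where
  m x := if x = a then b else if x = b then a else M.m x
  invol x := by
    have hab : a ≠ b := fun h => I.acc_irrefl a (h ▸ hacc)
    by_cases hxa : x = a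
    · simp [hxa, hab, hab.symm]
    · by_cases hxb : x = b
      · simp [hxb, hab, hab.symm]
      · have h1 : M.m x ≠ a := fun h => hxa (by rw [← M.invol x, h, ha])
        have h2 : M.m x ≠ b := fun h => hxb (by rw [← M.invol x, h, hb])
        simp [hxa, hxb, h1, h2, M.invol]
  acc_matched x hx := by
    have hab : a ≠ b := fun h => I.acc_irrefl a (h ▸ hacc)
    by_cases hxa : x = a
    · simpa [hxa] using hacc
    · by_cases hxb : x = b
      · simp only [hxb, if_neg (Ne.symm hab : ¬ b = a), if_pos rfl]
        exact I.acc_symm _ _ hacc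
      · simp only [if_neg hxa, if_neg hxb] at hx ⊢
        exact M.acc_matched x hx

lemma match1_msize (M : Matching I) (a b : A) (ha : M.m a = a) (hb : M.m b = b)
    (hacc : I.acc a b) : msize I (match1 M a b ha hb hacc) = msize I M + 2 := by
  have hab : a ≠ b := fun h => I.acc_irrefl a (h ▸ hacc)
  have hset : {x | (match1 M a b ha hb hacc).m x ≠ x}
      = insert a (insert b {x | M.m x ≠ x}) := by
    ext x
    by_cases hxa : x = a
    · simp [match1, hxa, hab.symm]
    · by_cases hxb : x = b
      · simp [match1, hxb, hab, Ne.symm hab]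
      · simp [match1, hxa, hxb]
  rw [msize, hset,
    Set.ncard_insert_of_notMem (by simp [hab, ha]) (Set.toFinite _),
    Set.ncard_insert_of_notMem (by simp [hb]) (Set.toFinite _)]
  rfl


/-- Rematch unmatched `a` with matched `b`, unmatching `b`'s partner. -/
noncomputable def match2 (M : Matching I) (a b : A) (ha : M.m a = a) (hb : M.m b ≠ b)
    (hacc : I.acc a b) : Matching I where
  m x := if x = a then b else if x = b then a else if x = M.m b then M.m b else M.m x
  invol x := by
    have hab : a ≠ b := fun h => I.acc_irrefl a (h ▸ hacc)
    have hb'a : M.m b ≠ a := fun h => hb (h.trans (by rw [← M.invol b, h, ha]))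
    by_cases hxa : x = a
    · simp [hxa, hab, hab.symm]
    · by_cases hxb : x = b
      · simp [hxb, hab, hab.symm]
      · by_cases hxb' : x = M.m b
        · simp [hxb', hb'a, hb, Ne.symm hb]
        · have h1 : M.m x ≠ a := fun h => hxa (by rw [← M.invol x, h, ha])
          have h2 : M.m x ≠ b := fun h => hxb' (by rw [← M.invol x, h])
          have h3 : M.m x ≠ M.m b := fun h => hxb (by rw [← M.invol x, h, M.invol])
          simp [hxa, hxb, hxb', h1, h2, h3, M.invol]
  acc_matched x hx := by
    have hab : a ≠ b := fun h => I.acc_irrefl a (h ▸ hacc)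
    by_cases hxa : x = a
    · simpa [hxa] using hacc
    · by_cases hxb : x = b
      · simp only [hxb, if_neg (Ne.symm hab : ¬ b = a), if_pos rfl]
        exact I.acc_symm _ _ hacc
      · by_cases hxb' : x = M.m b
        · have hb'a : M.m b ≠ a := fun h => hb (h.trans (by rw [← M.invol b, h, ha]))
          exfalso; apply hx; simp [hxb', hb'a, hb]
        · simp only [if_neg hxa, if_neg hxb, if_neg hxb'] at hx ⊢
          exact M.acc_matched x hx

lemma match2_m_a (M : Matching I) (a b : A) (ha hb hacc) :
    (match2 M a b ha hb hacc).m a = b := by simp [match2]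

lemma match2_m_b (M : Matching I) (a b : A) (ha hb hacc) :
    (match2 M a b ha hb hacc).m b = a := by
  have hab : a ≠ b := fun h => I.acc_irrefl a (h ▸ hacc)
  simp [match2, Ne.symm hab]

lemma match2_m_b' (M : Matching I) (a b : A) (ha hb hacc) :
    (match2 M a b ha hb hacc).m (M.m b) = M.m b := by
  have hb'a : M.m b ≠ a := fun h => hb (h.trans (by rw [← M.invol b, h, ha]))
  simp [match2, hb'a, hb]

lemma match2_m_other (M : Matching I) (a b : A) (ha hb hacc) {x : A}
    (h1 : x ≠ a) (h2 : x ≠ b) (h3 : x ≠ M.m b) :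
    (match2 M a b ha hb hacc).m x = M.m x := by simp [match2, h1, h2, h3]

lemma match2_msize (M : Matching I) (a b : A) (ha : M.m a = a) (hb : M.m b ≠ b)
    (hacc : I.acc a b) : msize I (match2 M a b ha hb hacc) = msize I M := by
  have hab : a ≠ b := fun h => I.acc_irrefl a (h ▸ hacc)
  have hb'a : M.m b ≠ a := fun h => hb (h.trans (by rw [← M.invol b, h, ha]))
  have hb'mem : M.m b ∈ {x | M.m x ≠ x} := by
    simp only [Set.mem_setOf_eq, M.invol]
    exact fun h => hb h.symm
  have hset : {x | (match2 M a b ha hb hacc).m x ≠ x}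
      = insert a ({x | M.m x ≠ x} \ {M.m b}) := by
    ext x
    by_cases hxa : x = a
    · simp [match2, hxa, hab.symm]
    · by_cases hxb : x = b
      · subst hxb
        rw [Set.mem_setOf_eq, match2_m_b]
        simp [hab, Ne.symm hab, hb, Ne.symm hb]
      · by_cases hxb' : x = M.m b
        · simp [match2, hxb', hb'a, hb]
        · simp [match2, hxa, hxb, hxb']
  rw [msize, msize, hset,
    Set.ncard_insert_of_notMem (by simp [ha]) (Set.toFinite _),
    Set.ncard_diff_singleton_of_mem hb'mem]
  have : 0 < ({x | M.m x ≠ x} : Set A).ncard :=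
    (Set.ncard_pos (Set.toFinite _)).2 ⟨_, hb'mem⟩
  omega


lemma key (hdeg : ∀ a, {b | I.acc a b}.ncard ≤ 2) (M : Matching I) (hM : MaxCard I M)
    {a b c : A} (hb : blocks I M a b) (hc : blocks I M a c) (hbc : b ≠ c)
    (hpref : I.pref a b c) :
    ∃ M' : Matching I, MaxCard I M' ∧ totalBP I M' < totalBP I M := by
  have hab : a ≠ b := fun h => I.acc_irrefl a (h ▸ hb.1)
  have hac : a ≠ c := fun h => I.acc_irrefl a (h ▸ hc.1)
  -- a is unmatched
  have ha : M.m a = a := by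
    by_contra h
    have macc := M.acc_matched a h
    have h1 : M.m a ≠ b := by
      intro he
      rcases hb.2.1 with h' | h'
      · exact h h'
      · rw [he] at h'; exact I.pref_irrefl _ _ h'
    have h2 : M.m a ≠ c := by
      intro he
      rcases hc.2.1 with h' | h'
      · exact h h'
      · rw [he] at h'; exact I.pref_irrefl _ _ h'
    exact third hdeg hb.1 hc.1 macc hbc h1 h2
  -- b is matched
  have hmb : M.m b ≠ b := by
    intro h
    have := hM (match1 M a b ha h hb.1)
    rw [match1_msize] at this
    omega
  have prefb : I.pref b a (M.m b) := by
    rcases hb.2.2 with h | h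
    · exact absurd h hmb
    · exact h
  have hb'a : M.m b ≠ a := fun h => hmb (h.trans (by rw [← M.invol b, h, ha]))
  set N := match2 M a b ha hmb hb.1 with hN
  refine ⟨N, fun M' => (match2_msize M a b ha hmb hb.1) ▸ hM M', ?_⟩
  -- no blocking pair of N contains a
  have noA : ∀ y, ¬ blocks I N a y := by
    intro y hy
    rcases hy.2.1 with h' | h'
    · rw [match2_m_a] at h'; exact hab h'.symm
    · rw [match2_m_a] at h'
      by_cases hyb : y = b
      · subst hyb; exact I.pref_irrefl _ _ h'
      by_cases hyc : y = c
      · rw [hyc] at h'; exact I.pref_irrefl _ _ (I.pref_trans a c b c h' hpref)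
      exact third hdeg hb.1 hc.1 hy.1 hbc hyb hyc
  -- no blocking pair of N contains b
  have noB : ∀ y, ¬ blocks I N b y := by
    intro y hy
    rcases hy.2.1 with h' | h'
    · rw [match2_m_b] at h'; exact hab h'
    · rw [match2_m_b] at h'
      by_cases hya : y = a
      · subst hya; exact I.pref_irrefl _ _ h'
      by_cases hyb' : y = M.m b
      · rw [hyb'] at h'; exact I.pref_irrefl _ _ (I.pref_trans b (M.m b) a (M.m b) h' prefb)
      exact third hdeg (I.acc_symm _ _ hb.1) (M.acc_matched b hmb) hy.1
        (Ne.symm hb'a) hya hyb'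
  set S : Set (Sym2 A) := {p | ∃ x y, p = s(x, y) ∧ blocks I M x y} with hSdef
  set S' : Set (Sym2 A) := {p | ∃ x y, p = s(x, y) ∧ blocks I N x y} with hS'def
  set D : Set (Sym2 A) := S' ∩ {p | M.m b ∈ p} with hDdef
  -- blocking pairs of N avoiding b' are blocking pairs of M, distinct from s(a,b), s(a,c)
  have hSsub : S' \ D ⊆ (S \ {s(a, b)}) \ {s(a, c)} := by
    rintro p ⟨hpS', hpD⟩
    obtain ⟨x, y, rfl, hxy⟩ := hpS'
    have hnb' : M.m b ∉ s(x, y) := fun h => hpD ⟨⟨x, y, rfl, hxy⟩, h⟩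
    have hxb' : x ≠ M.m b := fun h => hnb' (h ▸ Sym2.mem_mk_left x y)
    have hyb' : y ≠ M.m b := fun h => hnb' (h ▸ Sym2.mem_mk_right x y)
    have hxa : x ≠ a := fun h => noA y (h ▸ hxy)
    have hya : y ≠ a := fun h => noA x (h ▸ blocks_symm hxy)
    have hxb : x ≠ b := fun h => noB y (h ▸ hxy)
    have hyb : y ≠ b := fun h => noB x (h ▸ blocks_symm hxy)
    have hblk : blocks I M x y := by
      obtain ⟨h1, h2, h3⟩ := hxy
      rw [match2_m_other M a b ha hmb hb.1 hxa hxb hxb'] at h2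
      rw [match2_m_other M a b ha hmb hb.1 hya hyb hyb'] at h3
      exact ⟨h1, h2, h3⟩
    refine ⟨⟨⟨x, y, rfl, hblk⟩, ?_⟩, ?_⟩
    · intro h
      have : a ∈ s(x, y) := by rw [Set.mem_singleton_iff] at h; rw [h]; exact Sym2.mem_mk_left a b
      rw [Sym2.mem_iff] at this
      rcases this with h' | h' <;> [exact hxa h'.symm; exact hya h'.symm]
    · intro h
      have : a ∈ s(x, y) := by rw [Set.mem_singleton_iff] at h; rw [h]; exact Sym2.mem_mk_left a c
      rw [Sym2.mem_iff] at this
      rcases this with h' | h' <;> [exact hxa h'.symm; exact hya h'.symm]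
  -- at most one blocking pair of N contains b'
  have hD : D.ncard ≤ 1 := by
    have hsub : D ⊆ (fun y => s(M.m b, y)) '' ({y | I.acc (M.m b) y} \ {b}) := by
      rintro p ⟨hpS', hmem⟩
      obtain ⟨x, y, rfl, hxy⟩ := hpS'
      have hnotb : ∀ z, ¬ blocks I N (M.m b) z → True := fun _ _ => trivial
      have key' : ∀ z, blocks I N (M.m b) z → z ≠ b := by
        intro z hz hzb
        rw [hzb] at hz
        rcases hz.2.2 with h' | h'
        · rw [match2_m_b] at h'; exact hab h'
        · rw [match2_m_b] at h'
          exact I.pref_irrefl _ _ (I.pref_trans b (M.m b) a (M.m b) h' prefb)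
      simp only [Set.mem_setOf_eq, Sym2.mem_iff] at hmem
      rcases hmem with h' | h'
      · subst h'
        exact ⟨y, ⟨hxy.1, key' y hxy⟩, rfl⟩
      · subst h'
        exact ⟨x, ⟨(blocks_symm hxy).1, key' x (blocks_symm hxy)⟩, Sym2.eq_swap⟩
    have hbmem : b ∈ {y | I.acc (M.m b) y} :=
      I.acc_symm _ _ (M.acc_matched b hmb)
    have h1 : ({y | I.acc (M.m b) y} \ {b}).ncard = {y | I.acc (M.m b) y}.ncard - 1 :=
      Set.ncard_diff_singleton_of_mem hbmem
    have h2 := hdeg (M.m b)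
    calc D.ncard ≤ _ := Set.ncard_le_ncard hsub (Set.toFinite _)
      _ ≤ ({y | I.acc (M.m b) y} \ {b}).ncard := Set.ncard_image_le (Set.toFinite _)
      _ ≤ 1 := by omega
  have memab : s(a, b) ∈ S := ⟨a, b, rfl, hb⟩
  have memac : s(a, c) ∈ S := ⟨a, c, rfl, hc⟩
  have hne : s(a, b) ≠ s(a, c) := by
    intro h
    rw [Sym2.eq_iff] at h
    rcases h with ⟨_, h⟩ | ⟨h, _⟩ <;> [exact hbc h; exact hac h]
  have h1 : S'.ncard ≤ (S' \ D).ncard + D.ncard := by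
    calc S'.ncard ≤ ((S' \ D) ∪ D).ncard := by
          refine Set.ncard_le_ncard (fun p hp => ?_) (Set.toFinite _)
          by_cases h : p ∈ D
          · exact Or.inr h
          · exact Or.inl ⟨hp, h⟩
      _ ≤ _ := Set.ncard_union_le _ _
  have h2 : (S' \ D).ncard ≤ ((S \ {s(a, b)}) \ {s(a, c)}).ncard :=
    Set.ncard_le_ncard hSsub (Set.toFinite _)
  have h3 : ((S \ {s(a, b)}) \ {s(a, c)}).ncard ≤ S.ncard - 2 := by
    rw [Set.ncard_diff_singleton_of_mem ((Set.mem_diff _).2 ⟨memac, hne.symm⟩),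
      Set.ncard_diff_singleton_of_mem memab]
    omega
  have h4 : 2 ≤ S.ncard := by
    have : ({s(a, b), s(a, c)} : Set (Sym2 A)) ⊆ S := by
      intro p hp; rcases hp with rfl | rfl <;> assumption
    have := Set.ncard_le_ncard this (Set.toFinite _)
    rw [Set.ncard_pair hne] at this
    exact this
  show S'.ncard < S.ncard
  omega

end Aux

theorem stmt9' (A : Type) [Fintype A] (I : SRI A)
    (hdeg : ∀ a, {b | I.acc a b}.ncard ≤ 2) :
    ∃ M : Matching I, MaxCard I M ∧ ∀ a, bpa I M a ≤ 1 := by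
  classical
  have hbdd : BddAbove (Set.range fun M : Matching I => msize I M) := by
    refine ⟨Nat.card A, ?_⟩
    rintro n ⟨M, rfl⟩
    have := Set.ncard_le_ncard (Set.subset_univ {a | M.m a ≠ a}) (Set.toFinite _)
    rwa [Set.ncard_univ] at this
  have hne : (Set.range fun M : Matching I => msize I M).Nonempty :=
    ⟨_, ⟨⟨id, fun _ => rfl, fun a h => absurd rfl h⟩, rfl⟩⟩
  obtain ⟨M0, hM0⟩ := Nat.sSup_mem hne hbdd
  have hmax : MaxCard I M0 := by
    intro M'
    simp only at hM0
    rw [hM0]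
    exact le_csSup hbdd ⟨M', rfl⟩
  set P : Set ℕ := {n | ∃ M : Matching I, MaxCard I M ∧ totalBP I M = n} with hP
  have hPne : P.Nonempty := ⟨_, M0, hmax, rfl⟩
  obtain ⟨M, hMmax, hMb⟩ := Nat.sInf_mem hPne
  refine ⟨M, hMmax, fun a => ?_⟩
  by_contra h
  push_neg at h
  have h2 : 1 < bpa I M a := h
  rw [bpa, Set.one_lt_ncard_iff (Set.toFinite _)] at h2
  obtain ⟨b, c, hbm, hcm, hbc⟩ := h2
  have hbm : blocks I M a b := hbm
  have hcm : blocks I M a c := hcm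
  rcases I.pref_total a b c hbm.1 hcm.1 hbc with hp | hp
  · obtain ⟨M', hM'max, hlt⟩ := key hdeg M hMmax hbm hcm hbc hp
    have : sInf P ≤ totalBP I M' := Nat.sInf_le ⟨M', hM'max, rfl⟩
    omega
  · obtain ⟨M', hM'max, hlt⟩ := key hdeg M hMmax hcm hbm hbc.symm hp
    have : sInf P ≤ totalBP I M' := Nat.sInf_le ⟨M', hM'max, rfl⟩
    omega

/-- If every preference list of a bipartite (SMI) instance has length at most 2,
then there is a maximum-cardinality matching in which no agent is in more than
one blocking pair. -/
theorem stmt9 (A : Type) [Fintype A] (I : SRI A) (side : A → Bool)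
    (hbip : Bip I side)
    (hdeg : ∀ a, {b | I.acc a b}.ncard ≤ 2) :
    ∃ M : Matching I, MaxCard I M ∧ ∀ a, bpa I M a ≤ 1 := by
  exact stmt9' A I hdeg
end
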